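/- Let X̄ ∈ R^{n×p} satisfy: ri(∂‖·‖_*(X̄)) ∩ rge A* ≠ ∅ and par(∂‖·‖_*(X̄)) + rge A* = R^{n×p}, for a linear map A : R^{n×p} → E. Then R^{n×p} = rge A* + R₊ · ∂‖·‖_*(X̄), where R₊ C = {t x : t ≥ 0, x ∈ C}. -/

import Mathlib

open Matrix

noncomputable def nuclearNorm {m n : Type*} [Fintype m] [Fintype n] [DecidableEq n]
    (A : Matrix m n ℝ) : ℝ :=
  (((Matrix.posSemidef_conjTranspose_mul_self A).1.eigenvectorUnitary : Matrix n n ℝ) *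
      Matrix.diagonal ((fun x : ℝ => x) ∘ (√·) ∘ (Matrix.posSemidef_conjTranspose_mul_self A).1.eigenvalues) *
      star ((Matrix.posSemidef_conjTranspose_mul_self A).1.eigenvectorUnitary :
        Matrix n n ℝ) : Matrix n n ℝ).trace

noncomputable def opNorm {m n : Type*} [Fintype m] [Fintype n] [DecidableEq m] [DecidableEq n]
    (A : Matrix m n ℝ) : ℝ :=
  ‖(LinearMap.toContinuousLinearMap
      (Matrix.toEuclideanLin A : EuclideanSpace ℝ n →ₗ[ℝ] EuclideanSpace ℝ m))‖

def finner {m n : Type*} [Fintype m] [Fintype n] (A B : Matrix m n ℝ) : ℝ :=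
  (Aᵀ * B).trace

noncomputable def nuclearSubdiff {m n : Type*} [Fintype m] [Fintype n] [DecidableEq n]
    (X : Matrix m n ℝ) : Set (Matrix m n ℝ) :=
  {Y | ∀ Z, nuclearNorm X + finner Y (Z - X) ≤ nuclearNorm Z}

def rectDiag (n p : ℕ) (s : Fin p → ℝ) : Matrix (Fin n) (Fin p) ℝ :=
  Matrix.of fun i j => if (i : ℕ) = (j : ℕ) then s j else 0

def blockIR (n p r : ℕ) (R : Matrix (Fin (n - r)) (Fin (p - r)) ℝ) :
    Matrix (Fin n) (Fin p) ℝ :=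
  Matrix.of fun i j =>
    if h : (i : ℕ) < r ∨ (j : ℕ) < r then (if (i : ℕ) = (j : ℕ) then 1 else 0)
    else R ⟨i - r, by have := i.isLt; omega⟩ ⟨j - r, by have := j.isLt; omega⟩

/-- The range of the adjoint $\mathcal{A}^*$, described via the Frobenius inner product. -/
def rgeAstar {n p : ℕ} {E : Type*} [NormedAddCommGroup E] [InnerProductSpace ℝ E]
    (A : Matrix (Fin n) (Fin p) ℝ →ₗ[ℝ] E) : Set (Matrix (Fin n) (Fin p) ℝ) :=
  {M | ∃ y : E, ∀ Z, finner M Z = (inner ℝ y (A Z) : ℝ)}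

lemma key {V : Type*} [AddCommGroup V] [Module ℝ V] [TopologicalSpace V]
    [IsTopologicalAddGroup V] [ContinuousSMul ℝ V]
    {s : Set V} {w v : V} (hw : w ∈ intrinsicInterior ℝ s)
    (hv : v ∈ vectorSpan ℝ s) :
    ∃ ε : ℝ, 0 < ε ∧ w + ε • v ∈ s := by
  rw [intrinsicInterior] at hw
  obtain ⟨w', hw', rfl⟩ := hw
  have hv' : v ∈ (affineSpan ℝ s).direction := by
    rw [direction_affineSpan]; exact hv
  have hmem : ∀ t : ℝ, (w' : V) + t • v ∈ affineSpan ℝ s := fun t => by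
    have := AffineSubspace.vadd_mem_of_mem_direction
      (Submodule.smul_mem _ t hv') w'.2
    simpa [add_comm] using this
  set f : ℝ → affineSpan ℝ s := fun t => ⟨(w' : V) + t • v, hmem t⟩ with hf
  have hcont : Continuous f :=
    Continuous.subtype_mk (continuous_const.add (continuous_id.smul continuous_const)) _
  have h0 : f 0 = w' := by simp [hf]
  have hev : ∀ᶠ t in nhds (0 : ℝ), f t ∈ interior ((↑) ⁻¹' s : Set (affineSpan ℝ s)) := by
    apply hcont.continuousAt.eventually_mem
    rw [h0]
    exact isOpen_interior.mem_nhds hw'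
  obtain ⟨ε, hball, hε⟩ :=
    ((hev.filter_mono nhdsWithin_le_nhds).and
      (eventually_mem_nhdsWithin (s := Set.Ioi (0:ℝ)))).exists
  refine ⟨ε, hε, ?_⟩
  have h2 : f ε ∈ (Subtype.val ⁻¹' s : Set (affineSpan ℝ s)) := interior_subset hball
  exact h2

lemma finner_sub_smul {m n : Type*} [Fintype m] [Fintype n]
    (M W Z : Matrix m n ℝ) (c : ℝ) :
    finner (M - c • W) Z = finner M Z - c * finner W Z := by
  simp [finner, Matrix.sub_mul, Matrix.smul_mul, Matrix.trace_sub, Matrix.trace_smul,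
    Matrix.transpose_sub, Matrix.transpose_smul, smul_eq_mul]

lemma rgeAstar_sub_smul {n p : ℕ} {E : Type*} [NormedAddCommGroup E] [InnerProductSpace ℝ E]
    (A : Matrix (Fin n) (Fin p) ℝ →ₗ[ℝ] E) {M W : Matrix (Fin n) (Fin p) ℝ} (c : ℝ)
    (hM : M ∈ rgeAstar A) (hW : W ∈ rgeAstar A) : M - c • W ∈ rgeAstar A := by
  obtain ⟨y, hy⟩ := hM
  obtain ⟨z, hz⟩ := hW
  refine ⟨y - c • z, fun Z => ?_⟩
  rw [finner_sub_smul, hy, hz, inner_sub_left, real_inner_smul_left]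

open Pointwise in
theorem space_eq_rgeAstar_add_cone_subdiff {n p : ℕ} {E : Type*}
    [NormedAddCommGroup E] [InnerProductSpace ℝ E] [FiniteDimensional ℝ E]
    (A : Matrix (Fin n) (Fin p) ℝ →ₗ[ℝ] E)
    (Xb : Matrix (Fin n) (Fin p) ℝ)
    (hri : (intrinsicInterior ℝ (nuclearSubdiff Xb) ∩ rgeAstar A).Nonempty)
    (hpar : (↑(vectorSpan ℝ (nuclearSubdiff Xb)) : Set (Matrix (Fin n) (Fin p) ℝ))
        + rgeAstar A = Set.univ) :
    (Set.univ : Set (Matrix (Fin n) (Fin p) ℝ))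
      = rgeAstar A + {M | ∃ t : ℝ, 0 ≤ t ∧ ∃ C ∈ nuclearSubdiff Xb, M = t • C} := by
  obtain ⟨W, hWint, hWrge⟩ := hri
  apply Set.eq_of_subset_of_subset _ (Set.subset_univ _)
  intro M _
  have hM : M ∈ (Set.univ : Set (Matrix (Fin n) (Fin p) ℝ)) := Set.mem_univ M
  rw [← hpar] at hM
  obtain ⟨V, hV, S, hS, hVS⟩ := hM
  obtain ⟨ε, hε, hWV⟩ := key hWint hV
  rw [Set.mem_add]
  refine ⟨S - ε⁻¹ • W, rgeAstar_sub_smul A ε⁻¹ hS hWrge,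
    ε⁻¹ • (W + ε • V), ⟨ε⁻¹, by positivity, W + ε • V, hWV, rfl⟩, ?_⟩
  rw [smul_add, smul_smul, inv_mul_cancel₀ hε.ne', one_smul]
  rw [← hVS]
  abel
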